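/- arXiv:2008.04503 — 2 statements merged into one kernel-verified Lean document; each statement's English description precedes it below -/
import Mathlib

section
/- Every orbit D of G_{e}(k) (the edge group attached to the edge {v0,v1}) on P^1(F) is either an orbit of G_{v0}(k) or an orbit of G_{v1}(k): namely, on {|z| ≤ 1} the G_e(k)-orbits coincide with the G_{v1}(k)-orbits (discs of radius |ϖ|^{k−1}), and on {|1/w| ≤ |ϖ|} they coincide with the G_{v0}(k)-orbits (discs of radius |ϖ|^k in coordinate 1/w). -/
open Matrix Pointwise
open scoped OnePoint

noncomputable section

/-- `ϖ` is a uniformizer of the nonarchimedean field `F`. -/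
def IsUniformizer (F : Type*) [NormedField F] (ϖ : F) : Prop :=
  ϖ ≠ 0 ∧ ‖ϖ‖ < 1 ∧ ∀ x : F, ‖x‖ < 1 → ‖x‖ ≤ ‖ϖ‖

/-- The principal congruence subgroup `G_{v₀}(k)` of level `k`: matrices in `GL₂(𝒪)`
congruent to the identity modulo `ϖ^k` (entrywise, each entry of `g - 1` lies in `ϖ^k 𝒪`,
i.e. has norm at most `‖ϖ‖^k`). -/
def Gv0 (F : Type*) [NormedField F] (ϖ : F) (k : ℕ) : Set (GL (Fin 2) F) :=
  {g | ‖(g : Matrix (Fin 2) (Fin 2) F) 0 0 - 1‖ ≤ ‖ϖ‖ ^ k ∧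
       ‖(g : Matrix (Fin 2) (Fin 2) F) 0 1‖ ≤ ‖ϖ‖ ^ k ∧
       ‖(g : Matrix (Fin 2) (Fin 2) F) 1 0‖ ≤ ‖ϖ‖ ^ k ∧
       ‖(g : Matrix (Fin 2) (Fin 2) F) 1 1 - 1‖ ≤ ‖ϖ‖ ^ k}

/-- The diagonal matrix `diag(ϖ, 1)` as an element of `GL₂(F)`. -/
def dmat (F : Type*) [Field F] (ϖ : F) (h : ϖ ≠ 0) : GL (Fin 2) F :=
  Matrix.GeneralLinearGroup.mkOfDetNeZero !![ϖ, 0; 0, 1]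
    (by simpa [Matrix.det_fin_two_of] using h)

/-- `G_{v₁}(k) = diag(ϖ,1) · G_{v₀}(k) · diag(ϖ,1)⁻¹`. -/
def Gv1 (F : Type*) [NormedField F] (ϖ : F) (h : ϖ ≠ 0) (k : ℕ) : Set (GL (Fin 2) F) :=
  (fun g => dmat F ϖ h * g * (dmat F ϖ h)⁻¹) '' Gv0 F ϖ k

/-- The explicit set `H` of matrices `[[1+ϖ^k a, ϖ^k b],[ϖ^{k-1} c, 1+ϖ^k d]]`, `a,b,c,d ∈ 𝒪`;
this is the edge group `G_e(k)`. -/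
def Ge (F : Type*) [NormedField F] (ϖ : F) (k : ℕ) : Set (GL (Fin 2) F) :=
  {g | ‖(g : Matrix (Fin 2) (Fin 2) F) 0 0 - 1‖ ≤ ‖ϖ‖ ^ k ∧
       ‖(g : Matrix (Fin 2) (Fin 2) F) 0 1‖ ≤ ‖ϖ‖ ^ k ∧
       ‖(g : Matrix (Fin 2) (Fin 2) F) 1 0‖ ≤ ‖ϖ‖ ^ (k - 1) ∧
       ‖(g : Matrix (Fin 2) (Fin 2) F) 1 1 - 1‖ ≤ ‖ϖ‖ ^ k}

/-- The explicit description of `G_{v₁}(k)`: matrices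
`[[1+ϖ^k a, ϖ^{k+1} b],[ϖ^{k-1} c, 1+ϖ^k d]]` with `a,b,c,d ∈ 𝒪`. -/
def Gv1ex (F : Type*) [NormedField F] (ϖ : F) (k : ℕ) : Set (GL (Fin 2) F) :=
  {g | ‖(g : Matrix (Fin 2) (Fin 2) F) 0 0 - 1‖ ≤ ‖ϖ‖ ^ k ∧
       ‖(g : Matrix (Fin 2) (Fin 2) F) 0 1‖ ≤ ‖ϖ‖ ^ (k + 1) ∧
       ‖(g : Matrix (Fin 2) (Fin 2) F) 1 0‖ ≤ ‖ϖ‖ ^ (k - 1) ∧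
       ‖(g : Matrix (Fin 2) (Fin 2) F) 1 1 - 1‖ ≤ ‖ϖ‖ ^ k}

open scoped Classical in
/-- The right Möbius action of `g = [[a,b],[c,d]]` on `ℙ¹(F) = F ∪ {∞}` (here modelled as
`Option F`, with `none = ∞`): `z·g = (az+c)/(bz+d)`, `∞·g = a/b`, with value `∞` when the
denominator vanishes. -/
def moeb (F : Type*) [Field F] (g : Matrix (Fin 2) (Fin 2) F) : Option F → Option F
  | Option.some z => if g 0 1 * z + g 1 1 = 0 then Option.none
      else Option.some ((g 0 0 * z + g 1 0) / (g 0 1 * z + g 1 1))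
  | Option.none => if g 0 1 = 0 then Option.none else Option.some (g 0 0 / g 0 1)

/-- The orbit of `z ∈ ℙ¹(F)` under a set `S` of elements of `GL₂(F)` acting on the right by
Möbius transformations. -/
def orb (F : Type*) [Field F] (S : Set (GL (Fin 2) F)) (z : Option F) : Set (Option F) :=
  {w | ∃ g ∈ S, moeb F (g : Matrix (Fin 2) (Fin 2) F) z = w}

/-- `D` is an orbit of `S` on `ℙ¹(F)`. -/
def IsOrbit (F : Type*) [Field F] (S : Set (GL (Fin 2) F)) (D : Set (Option F)) : Prop :=
  ∃ z, D = orb F S z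

/-- The region `B_w(∞, |ϖ|) = {w ∈ ℙ¹(F) : |1/w| ≤ |ϖ|} = {|w| ≥ |ϖ|⁻¹} ∪ {∞}`. -/
def regionInfty (F : Type*) [NormedField F] (ϖ : F) : Set (Option F) :=
  {w | w = Option.none ∨ ∃ z : F, w = Option.some z ∧ ‖ϖ‖⁻¹ ≤ ‖z‖}

/-- The coordinate `1/w` on `ℙ¹(F)`, with `1/∞ = 0`. -/
def invc (F : Type*) [Field F] : Option F → F
  | Option.none => 0
  | Option.some z => z⁻¹

/-- The residue field of `F` has cardinality `q`: there are exactly `q` classes in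
`𝒪/(ϖ)`, witnessed by a set of representatives. -/
def ResidueCard (F : Type*) [NormedField F] (ϖ : F) (q : ℕ) : Prop :=
  ∃ s : Finset F, s.card = q ∧ (∀ x ∈ s, ‖x‖ ≤ 1) ∧
    ∀ x : F, ‖x‖ ≤ 1 → ∃! y, y ∈ s ∧ ‖x - y‖ ≤ ‖ϖ‖

/-- The conjugate `h S h⁻¹` of a set of matrices. -/
def conjSet (F : Type*) [Field F] (h : GL (Fin 2) F) (S : Set (GL (Fin 2) F)) :
    Set (GL (Fin 2) F) :=
  (fun g => h * g * h⁻¹) '' S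

/-- The matrix `g_α = [[1,0],[α,ϖ]]` as an element of `GL₂(F)`. -/
def galpha (F : Type*) [Field F] (ϖ α : F) (h : ϖ ≠ 0) : GL (Fin 2) F :=
  Matrix.GeneralLinearGroup.mkOfDetNeZero !![1, 0; α, ϖ]
    (by simpa [Matrix.det_fin_two_of] using h)

/-- The diagonal matrix `diag(1, ϖ^n)` as an element of `GL₂(F)`. -/
def dmatN (F : Type*) [Field F] (ϖ : F) (h : ϖ ≠ 0) (n : ℕ) : GL (Fin 2) F :=
  Matrix.GeneralLinearGroup.mkOfDetNeZero !![1, 0; 0, ϖ ^ n]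
    (by simpa [Matrix.det_fin_two_of] using pow_ne_zero n h)

/-! ### Auxiliary lemmas for the proof -/

section AuxProof
open scoped Classical
set_option linter.unusedSectionVars false

variable {F : Type*} [NormedField F] [IsUltrametricDist F]

lemma uadd {x y : F} {r : ℝ} (hx : ‖x‖ ≤ r) (hy : ‖y‖ ≤ r) : ‖x + y‖ ≤ r :=
  (IsUltrametricDist.norm_add_le_max x y).trans (max_le hx hy)

lemma usub {x y : F} {r : ℝ} (hx : ‖x‖ ≤ r) (hy : ‖y‖ ≤ r) : ‖x - y‖ ≤ r := by
  rw [sub_eq_add_neg]; exact uadd hx (by simpa using hy)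

lemma norm_add_eq_left {x y : F} (h : ‖y‖ < ‖x‖) : ‖x + y‖ = ‖x‖ := by
  refine le_antisymm (uadd le_rfl h.le) ?_
  by_contra hlt
  push_neg at hlt
  have hx : ‖x‖ ≤ max ‖x + y‖ ‖y‖ := by
    simpa using IsUltrametricDist.norm_add_le_max (x + y) (-y)
  rcases max_cases ‖x + y‖ ‖y‖ with ⟨h1, _⟩ | ⟨h1, _⟩ <;> rw [h1] at hx <;> linarith

lemma norm_eq_one_of_close {x : F} (h : ‖x - 1‖ < 1) : ‖x‖ = 1 := by
  have := norm_add_eq_left (x := (1 : F)) (y := x - 1) (by simpa using h)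
  simpa using this

lemma mul_norm_le {x y : F} {r : ℝ} (hx : ‖x‖ ≤ r) (hy : ‖y‖ ≤ 1) : ‖x * y‖ ≤ r := by
  have h0 : 0 ≤ r := (norm_nonneg x).trans hx
  rw [norm_mul]
  exact (mul_le_mul hx hy (norm_nonneg _) h0).trans (by rw [mul_one])

lemma coe_mkdet (A : Matrix (Fin 2) (Fin 2) F) (h : A.det ≠ 0) :
    ((Matrix.GeneralLinearGroup.mkOfDetNeZero A h : GL (Fin 2) F) :
      Matrix (Fin 2) (Fin 2) F) = A := rfl

/-- Lower triangular translation matrix `[[1,0],[t,1]]`. -/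
def lowerT (t : F) : GL (Fin 2) F :=
  Matrix.GeneralLinearGroup.mkOfDetNeZero !![1, 0; t, 1] (by simp [Matrix.det_fin_two_of])

/-- Upper triangular translation matrix `[[1,t],[0,1]]`. -/
def upperT (t : F) : GL (Fin 2) F :=
  Matrix.GeneralLinearGroup.mkOfDetNeZero !![1, t; 0, 1] (by simp [Matrix.det_fin_two_of])

lemma lowerT_coe (t : F) : ((lowerT t : GL (Fin 2) F) : Matrix (Fin 2) (Fin 2) F)
    = !![1, 0; t, 1] := rfl

lemma upperT_coe (t : F) : ((upperT t : GL (Fin 2) F) : Matrix (Fin 2) (Fin 2) F)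
    = !![1, t; 0, 1] := rfl

lemma moeb_lowerT (t z : F) :
    moeb F ((lowerT t : GL (Fin 2) F) : Matrix (Fin 2) (Fin 2) F) (Option.some z)
      = Option.some (z + t) := by
  rw [lowerT_coe]
  simp [moeb]

lemma moeb_upperT_none (t : F) :
    moeb F ((upperT t : GL (Fin 2) F) : Matrix (Fin 2) (Fin 2) F) Option.none
      = if t = 0 then Option.none else Option.some t⁻¹ := by
  rw [upperT_coe]
  simp [moeb, one_div]

lemma moeb_upperT_some (t z : F) :
    moeb F ((upperT t : GL (Fin 2) F) : Matrix (Fin 2) (Fin 2) F) (Option.some z)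
      = if t * z + 1 = 0 then Option.none else Option.some (z / (t * z + 1)) := by
  rw [upperT_coe]
  simp [moeb]

end AuxProof

section MainAux
open scoped Classical
set_option linter.unusedSectionVars false

variable {F : Type*} [NormedField F] [IsUltrametricDist F] {ϖ : F} {k : ℕ}

lemma pow_pred_mul (hϖ : IsUniformizer F ϖ) (hk : 1 ≤ k) :
    ‖ϖ‖ ^ (k - 1) * ‖ϖ‖ = ‖ϖ‖ ^ k := by
  rw [← pow_succ]
  congr 1
  omega

lemma pow_le_pred (hϖ : IsUniformizer F ϖ) (hk : 1 ≤ k) : ‖ϖ‖ ^ k ≤ ‖ϖ‖ ^ (k - 1) :=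
  pow_le_pow_of_le_one (norm_nonneg _) hϖ.2.1.le (by omega)

lemma pow_k_lt_one (hϖ : IsUniformizer F ϖ) (hk : 1 ≤ k) : ‖ϖ‖ ^ k < 1 :=
  pow_lt_one₀ (norm_nonneg _) hϖ.2.1 (by omega)

lemma upperT_mem_Gv0 {t : F} (ht : ‖t‖ ≤ ‖ϖ‖ ^ k) : upperT t ∈ Gv0 F ϖ k := by
  have pn : (0 : ℝ) ≤ ‖ϖ‖ ^ k := pow_nonneg (norm_nonneg _) _
  exact ⟨by rw [upperT_coe]; simpa using pn, by rw [upperT_coe]; simpa using ht,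
    by rw [upperT_coe]; simpa using pn, by rw [upperT_coe]; simpa using pn⟩

lemma lowerT_mem_Gv1 (hϖ : IsUniformizer F ϖ) (hk : 1 ≤ k) {t : F}
    (ht : ‖t‖ ≤ ‖ϖ‖ ^ (k - 1)) : lowerT t ∈ Gv1 F ϖ hϖ.1 k := by
  have pn : (0 : ℝ) ≤ ‖ϖ‖ ^ k := pow_nonneg (norm_nonneg _) _
  refine ⟨lowerT (t * ϖ), ⟨?_, ?_, ?_, ?_⟩, ?_⟩
  · rw [lowerT_coe]; simpa using pn
  · rw [lowerT_coe]; simpa using pn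
  · rw [lowerT_coe]
    have he : (!![1, 0; t * ϖ, 1] : Matrix (Fin 2) (Fin 2) F) 1 0 = t * ϖ := by simp
    rw [he, norm_mul, ← pow_pred_mul hϖ hk]
    exact mul_le_mul_of_nonneg_right ht (norm_nonneg _)
  · rw [lowerT_coe]; simpa using pn
  · rw [mul_inv_eq_iff_eq_mul]
    apply Units.ext
    show (dmat F ϖ hϖ.1 : Matrix (Fin 2) (Fin 2) F) * _ =
      (_ : Matrix (Fin 2) (Fin 2) F) * (dmat F ϖ hϖ.1 : Matrix (Fin 2) (Fin 2) F)
    rw [dmat, coe_mkdet, lowerT_coe, lowerT_coe]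
    ext i j
    fin_cases i <;> fin_cases j <;> simp [Matrix.mul_apply, Fin.sum_univ_two] <;> ring

lemma Gv0_subset_Ge (hϖ : IsUniformizer F ϖ) (hk : 1 ≤ k) : Gv0 F ϖ k ⊆ Ge F ϖ k :=
  fun g hg => ⟨hg.1, hg.2.1, hg.2.2.1.trans (pow_le_pred hϖ hk), hg.2.2.2⟩

lemma conj_mem_Ge (hϖ : IsUniformizer F ϖ) (hk : 1 ≤ k) {g : GL (Fin 2) F}
    (hg : g ∈ Gv0 F ϖ k) :
    dmat F ϖ hϖ.1 * g * (dmat F ϖ hϖ.1)⁻¹ ∈ Ge F ϖ k := by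
  have hϖ0 : (0 : ℝ) < ‖ϖ‖ := norm_pos_iff.mpr hϖ.1
  set d := dmat F ϖ hϖ.1 with hd
  have h1 : (d * g * d⁻¹) * d = d * g := by group
  have key : ((d * g * d⁻¹ : GL (Fin 2) F) : Matrix (Fin 2) (Fin 2) F) *
      (d : Matrix (Fin 2) (Fin 2) F) =
      (d : Matrix (Fin 2) (Fin 2) F) * (g : Matrix (Fin 2) (Fin 2) F) := by
    rw [← Units.val_mul, h1, Units.val_mul]
  have hdcoe : (d : Matrix (Fin 2) (Fin 2) F) = !![ϖ, 0; 0, 1] := rfl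
  set H := ((d * g * d⁻¹ : GL (Fin 2) F) : Matrix (Fin 2) (Fin 2) F) with hH
  set G := ((g : GL (Fin 2) F) : Matrix (Fin 2) (Fin 2) F) with hG
  have e00 : H 0 0 * ϖ = ϖ * G 0 0 := by
    have := congrFun (congrFun key 0) 0
    simpa [hdcoe, Matrix.mul_apply, Fin.sum_univ_two] using this
  have e01 : H 0 1 = ϖ * G 0 1 := by
    have := congrFun (congrFun key 0) 1
    simpa [hdcoe, Matrix.mul_apply, Fin.sum_univ_two] using this
  have e10 : H 1 0 * ϖ = G 1 0 := by
    have := congrFun (congrFun key 1) 0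
    simpa [hdcoe, Matrix.mul_apply, Fin.sum_univ_two] using this
  have e11 : H 1 1 = G 1 1 := by
    have := congrFun (congrFun key 1) 1
    simpa [hdcoe, Matrix.mul_apply, Fin.sum_univ_two] using this
  obtain ⟨h1', h2, h3, h4⟩ := hg
  refine ⟨?_, ?_, ?_, ?_⟩
  · have he : H 0 0 = G 0 0 :=
      mul_right_cancel₀ hϖ.1 (by rw [e00, mul_comm])
    show ‖H 0 0 - 1‖ ≤ ‖ϖ‖ ^ k
    rw [he]; exact h1'
  · show ‖H 0 1‖ ≤ ‖ϖ‖ ^ k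
    rw [e01, norm_mul]
    calc ‖ϖ‖ * ‖G 0 1‖ ≤ 1 * ‖ϖ‖ ^ k :=
          mul_le_mul hϖ.2.1.le h2 (norm_nonneg _) zero_le_one
      _ = ‖ϖ‖ ^ k := one_mul _
  · show ‖H 1 0‖ ≤ ‖ϖ‖ ^ (k - 1)
    have hle : ‖H 1 0‖ * ‖ϖ‖ ≤ ‖ϖ‖ ^ (k - 1) * ‖ϖ‖ := by
      rw [← norm_mul, e10, pow_pred_mul hϖ hk]; exact h3
    exact le_of_mul_le_mul_right hle hϖ0
  · show ‖H 1 1 - 1‖ ≤ ‖ϖ‖ ^ k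
    rw [e11]; exact h4

lemma Gv1_subset_Ge (hϖ : IsUniformizer F ϖ) (hk : 1 ≤ k) :
    Gv1 F ϖ hϖ.1 k ⊆ Ge F ϖ k := by
  rintro H ⟨g, hg, rfl⟩
  exact conj_mem_Ge hϖ hk hg

end MainAux

section MainAux2
open scoped Classical
set_option linter.unusedSectionVars false
set_option linter.deprecated false

variable {F : Type*} [NormedField F] [IsUltrametricDist F] {ϖ : F} {k : ℕ}

lemma orb_mono {S T : Set (GL (Fin 2) F)} (h : S ⊆ T) (z : Option F) :
    orb F S z ⊆ orb F T z := by
  rintro w ⟨g, hg, hw⟩; exact ⟨g, h hg, hw⟩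

lemma moeb_Ge_some (hϖ : IsUniformizer F ϖ) (hk : 1 ≤ k) {g : GL (Fin 2) F}
    (hg : g ∈ Ge F ϖ k) {z₀ : F} (hz₀ : ‖z₀‖ ≤ 1) :
    ∃ w : F, moeb F (g : Matrix (Fin 2) (Fin 2) F) (Option.some z₀) = Option.some w ∧
      ‖w - z₀‖ ≤ ‖ϖ‖ ^ (k - 1) := by
  obtain ⟨h1, h2, h3, h4⟩ := hg
  set A := (g : Matrix (Fin 2) (Fin 2) F) with hA
  have hbz : ‖A 0 1 * z₀‖ ≤ ‖ϖ‖ ^ k := mul_norm_le h2 hz₀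
  have hden1 : ‖A 0 1 * z₀ + A 1 1 - 1‖ ≤ ‖ϖ‖ ^ k := by
    have he : A 0 1 * z₀ + A 1 1 - 1 = A 0 1 * z₀ + (A 1 1 - 1) := by ring
    rw [he]; exact uadd hbz h4
  have hden : ‖A 0 1 * z₀ + A 1 1‖ = 1 :=
    norm_eq_one_of_close (lt_of_le_of_lt hden1 (pow_k_lt_one hϖ hk))
  have hne : A 0 1 * z₀ + A 1 1 ≠ 0 := by
    intro h; rw [h, norm_zero] at hden; exact zero_ne_one hden
  refine ⟨(A 0 0 * z₀ + A 1 0) / (A 0 1 * z₀ + A 1 1), ?_, ?_⟩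
  · simp only [moeb]; rw [if_neg hne]
  · have hrw : (A 0 0 * z₀ + A 1 0) / (A 0 1 * z₀ + A 1 1) - z₀
        = (A 0 0 * z₀ + A 1 0 - z₀ * (A 0 1 * z₀ + A 1 1)) / (A 0 1 * z₀ + A 1 1) := by
      rw [eq_div_iff hne, sub_mul, div_mul_cancel₀ _ hne]
    rw [hrw, norm_div, hden, div_one]
    have hsplit : A 0 0 * z₀ + A 1 0 - z₀ * (A 0 1 * z₀ + A 1 1)
        = ((A 0 0 - 1) * z₀ + (-(A 0 1 * z₀ * z₀))) + (A 1 0 + (-((A 1 1 - 1) * z₀))) := by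
      ring
    rw [hsplit]
    have pk : ‖ϖ‖ ^ k ≤ ‖ϖ‖ ^ (k - 1) := pow_le_pred hϖ hk
    refine uadd (uadd ?_ ?_) (uadd h3 ?_)
    · exact (mul_norm_le h1 hz₀).trans pk
    · rw [norm_neg]; exact (mul_norm_le (mul_norm_le h2 hz₀) hz₀).trans pk
    · rw [norm_neg]; exact (mul_norm_le h4 hz₀).trans pk

lemma disc_mem_orbGv1 (hϖ : IsUniformizer F ϖ) (hk : 1 ≤ k) {z₀ w : F}
    (hw : ‖w - z₀‖ ≤ ‖ϖ‖ ^ (k - 1)) :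
    Option.some w ∈ orb F (Gv1 F ϖ hϖ.1 k) (Option.some z₀) :=
  ⟨lowerT (w - z₀), lowerT_mem_Gv1 hϖ hk hw, by rw [moeb_lowerT]; congr 1; ring⟩

lemma discInf_mem_orbGv0 (hϖ : IsUniformizer F ϖ) (hk : 1 ≤ k) {w₀ : Option F}
    (hw₀ : w₀ ∈ regionInfty F ϖ) {w : Option F}
    (hw : (w = Option.none ∧ ‖invc F w₀‖ ≤ ‖ϖ‖ ^ k) ∨
      ∃ z : F, w = Option.some z ∧ z ≠ 0 ∧ ‖z⁻¹ - invc F w₀‖ ≤ ‖ϖ‖ ^ k) :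
    w ∈ orb F (Gv0 F ϖ k) w₀ := by
  have hϖ0 : (0 : ℝ) < ‖ϖ‖ := norm_pos_iff.mpr hϖ.1
  rcases hw₀ with rfl | ⟨z₀, rfl, hz₀⟩
  · have hu : invc F (Option.none : Option F) = 0 := rfl
    rcases hw with ⟨rfl, _⟩ | ⟨z, rfl, hz, hb⟩
    · refine ⟨upperT 0, upperT_mem_Gv0 (by simpa using pow_nonneg (norm_nonneg ϖ) k), ?_⟩
      rw [moeb_upperT_none, if_pos rfl]
    · rw [hu, sub_zero] at hb
      refine ⟨upperT z⁻¹, upperT_mem_Gv0 hb, ?_⟩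
      rw [moeb_upperT_none, if_neg (inv_ne_zero hz), inv_inv]
  · have hz₀pos : (0 : ℝ) < ‖z₀‖ := lt_of_lt_of_le (inv_pos.mpr hϖ0) hz₀
    have hz₀ne : z₀ ≠ 0 := norm_pos_iff.mp hz₀pos
    have hu : invc F (Option.some z₀) = z₀⁻¹ := rfl
    rcases hw with ⟨rfl, hb⟩ | ⟨z, rfl, hz, hb⟩
    · rw [hu] at hb
      refine ⟨upperT (-z₀⁻¹), upperT_mem_Gv0 (by simpa using hb), ?_⟩
      rw [moeb_upperT_some, if_pos (by field_simp; ring)]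
    · rw [hu] at hb
      refine ⟨upperT (z⁻¹ - z₀⁻¹), upperT_mem_Gv0 hb, ?_⟩
      have hcond : (z⁻¹ - z₀⁻¹) * z₀ + 1 = z⁻¹ * z₀ := by field_simp; ring
      rw [moeb_upperT_some, hcond, if_neg (mul_ne_zero (inv_ne_zero hz) hz₀ne)]
      congr 1
      field_simp

lemma moeb_Ge_inf (hϖ : IsUniformizer F ϖ) (hk : 1 ≤ k) {g : GL (Fin 2) F}
    (hg : g ∈ Ge F ϖ k) {w₀ : Option F} (hw₀ : w₀ ∈ regionInfty F ϖ) :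
    (moeb F (g : Matrix (Fin 2) (Fin 2) F) w₀ = Option.none ∧ ‖invc F w₀‖ ≤ ‖ϖ‖ ^ k) ∨
      ∃ z : F, moeb F (g : Matrix (Fin 2) (Fin 2) F) w₀ = Option.some z ∧ z ≠ 0 ∧
        ‖z⁻¹ - invc F w₀‖ ≤ ‖ϖ‖ ^ k := by
  obtain ⟨h1, h2, h3, h4⟩ := hg
  set A := (g : Matrix (Fin 2) (Fin 2) F) with hA
  have hϖ0 : (0 : ℝ) < ‖ϖ‖ := norm_pos_iff.mpr hϖ.1
  have pkl : ‖ϖ‖ ^ k < 1 := pow_k_lt_one hϖ hk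
  have ha : ‖A 0 0‖ = 1 := norm_eq_one_of_close (h1.trans_lt pkl)
  have hd : ‖A 1 1‖ = 1 := norm_eq_one_of_close (h4.trans_lt pkl)
  have hane : A 0 0 ≠ 0 := by
    intro h; rw [h, norm_zero] at ha; exact zero_ne_one ha
  rcases hw₀ with rfl | ⟨z₀, rfl, hz₀⟩
  · have hu : invc F (Option.none : Option F) = 0 := rfl
    by_cases hb : A 0 1 = 0
    · left
      refine ⟨by simp only [moeb]; rw [if_pos hb], ?_⟩
      rw [hu, norm_zero]; positivity
    · right
      refine ⟨A 0 0 / A 0 1, by simp only [moeb]; rw [if_neg hb], div_ne_zero hane hb, ?_⟩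
      rw [hu, sub_zero, inv_div, norm_div, ha, div_one]
      exact h2
  · have hz₀pos : (0 : ℝ) < ‖z₀‖ := lt_of_lt_of_le (inv_pos.mpr hϖ0) hz₀
    have hz₀ne : z₀ ≠ 0 := norm_pos_iff.mp hz₀pos
    have h1lt : 1 < ‖z₀‖ := lt_of_lt_of_le ((one_lt_inv₀ hϖ0).2 hϖ.2.1) hz₀
    have hu : invc F (Option.some z₀) = z₀⁻¹ := rfl
    by_cases hden : A 0 1 * z₀ + A 1 1 = 0
    · left
      refine ⟨by simp only [moeb]; rw [if_pos hden], ?_⟩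
      have hbz : A 0 1 * z₀ = -A 1 1 := eq_neg_of_add_eq_zero_left hden
      have hone : ‖A 0 1‖ * ‖z₀‖ = 1 := by rw [← norm_mul, hbz, norm_neg, hd]
      have hb' : ‖A 0 1‖ = ‖z₀‖⁻¹ := eq_inv_of_mul_eq_one_left hone
      rw [hu, norm_inv, ← hb']; exact h2
    · right
      have hNne : A 0 0 * z₀ + A 1 0 ≠ 0 := by
        have hc_lt : ‖A 1 0‖ < ‖A 0 0 * z₀‖ := by
          rw [norm_mul, ha, one_mul]
          exact lt_of_le_of_lt (h3.trans (pow_le_one₀ (norm_nonneg _) hϖ.2.1.le)) h1lt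
        have hNnorm : ‖A 0 0 * z₀ + A 1 0‖ = ‖z₀‖ := by
          rw [norm_add_eq_left hc_lt, norm_mul, ha, one_mul]
        intro h; rw [h, norm_zero] at hNnorm
        exact (ne_of_gt hz₀pos) hNnorm.symm
      have hc_lt : ‖A 1 0‖ < ‖A 0 0 * z₀‖ := by
        rw [norm_mul, ha, one_mul]
        exact lt_of_le_of_lt (h3.trans (pow_le_one₀ (norm_nonneg _) hϖ.2.1.le)) h1lt
      have hNnorm : ‖A 0 0 * z₀ + A 1 0‖ = ‖z₀‖ := by
        rw [norm_add_eq_left hc_lt, norm_mul, ha, one_mul]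
      refine ⟨(A 0 0 * z₀ + A 1 0) / (A 0 1 * z₀ + A 1 1),
        by simp only [moeb]; rw [if_neg hden], div_ne_zero hNne hden, ?_⟩
      rw [hu]
      have key : ((A 0 0 * z₀ + A 1 0) / (A 0 1 * z₀ + A 1 1))⁻¹ - z₀⁻¹
          = (A 0 1 * z₀ * z₀ + (A 1 1 - A 0 0) * z₀ + (-(A 1 0)))
            / ((A 0 0 * z₀ + A 1 0) * z₀) := by
        rw [inv_div]
        rw [inv_eq_one_div, div_sub_div _ _ hNne hz₀ne]
        ring
      rw [key, norm_div, norm_mul, hNnorm]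
      rw [div_le_iff₀ (by positivity)]
      have hz2 : ‖ϖ‖⁻¹ * ‖ϖ‖⁻¹ ≤ ‖z₀‖ * ‖z₀‖ :=
        mul_le_mul hz₀ hz₀ (by positivity) (norm_nonneg _)
      have hb1 : ‖A 0 1 * z₀ * z₀‖ ≤ ‖ϖ‖ ^ k * (‖z₀‖ * ‖z₀‖) := by
        rw [norm_mul, norm_mul]
        calc ‖A 0 1‖ * ‖z₀‖ * ‖z₀‖ ≤ ‖ϖ‖ ^ k * ‖z₀‖ * ‖z₀‖ :=
              mul_le_mul_of_nonneg_right
                (mul_le_mul_of_nonneg_right h2 (norm_nonneg _)) (norm_nonneg _)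
          _ = ‖ϖ‖ ^ k * (‖z₀‖ * ‖z₀‖) := by ring
      have hb2 : ‖(A 1 1 - A 0 0) * z₀‖ ≤ ‖ϖ‖ ^ k * (‖z₀‖ * ‖z₀‖) := by
        have hda : ‖A 1 1 - A 0 0‖ ≤ ‖ϖ‖ ^ k := by
          have he : A 1 1 - A 0 0 = (A 1 1 - 1) - (A 0 0 - 1) := by ring
          rw [he]; exact usub h4 h1
        rw [norm_mul]
        calc ‖A 1 1 - A 0 0‖ * ‖z₀‖ ≤ ‖ϖ‖ ^ k * ‖z₀‖ :=
              mul_le_mul_of_nonneg_right hda (norm_nonneg _)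
          _ ≤ ‖ϖ‖ ^ k * (‖z₀‖ * ‖z₀‖) := by
              refine mul_le_mul_of_nonneg_left ?_ (by positivity)
              nlinarith
      have hb3 : ‖-(A 1 0)‖ ≤ ‖ϖ‖ ^ k * (‖z₀‖ * ‖z₀‖) := by
        rw [norm_neg]
        have e1 : ‖ϖ‖ ^ (k - 1) = ‖ϖ‖ ^ k * ‖ϖ‖⁻¹ := by
          rw [← pow_pred_mul hϖ hk]
          field_simp
        have hle : ‖ϖ‖ ^ k * ‖ϖ‖⁻¹ ≤ ‖ϖ‖ ^ k * (‖z₀‖ * ‖z₀‖) := by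
          refine mul_le_mul_of_nonneg_left ?_ (by positivity)
          calc ‖ϖ‖⁻¹ ≤ ‖ϖ‖⁻¹ * ‖ϖ‖⁻¹ := by nlinarith [(one_lt_inv₀ hϖ0).2 hϖ.2.1]
            _ ≤ ‖z₀‖ * ‖z₀‖ := hz2
        exact h3.trans (by rw [e1]; exact hle)
      exact uadd (uadd hb1 hb2) hb3

end MainAux2

theorem statement12 (p : ℕ) [Fact p.Prime] (F : Type*) [NontriviallyNormedField F]
    [IsUltrametricDist F] [NormedAlgebra ℚ_[p] F] [FiniteDimensional ℚ_[p] F]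
    (ϖ : F) (hϖ : IsUniformizer F ϖ) (k : ℕ) (hk : 1 ≤ k) :
    (∀ D : Set (Option F), IsOrbit F (Ge F ϖ k) D →
      IsOrbit F (Gv0 F ϖ k) D ∨ IsOrbit F (Gv1 F ϖ hϖ.1 k) D) ∧
    (∀ z₀ : F, ‖z₀‖ ≤ 1 →
      orb F (Ge F ϖ k) (Option.some z₀) = orb F (Gv1 F ϖ hϖ.1 k) (Option.some z₀)) ∧
    (∀ w₀ ∈ regionInfty F ϖ, orb F (Ge F ϖ k) w₀ = orb F (Gv0 F ϖ k) w₀) := by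
  have part2 : ∀ z₀ : F, ‖z₀‖ ≤ 1 →
      orb F (Ge F ϖ k) (Option.some z₀) = orb F (Gv1 F ϖ hϖ.1 k) (Option.some z₀) := by
    intro z₀ hz₀
    apply Set.Subset.antisymm
    · rintro w ⟨g, hg, rfl⟩
      obtain ⟨w', hw', hbnd⟩ := moeb_Ge_some hϖ hk hg hz₀
      rw [hw']
      exact disc_mem_orbGv1 hϖ hk hbnd
    · exact orb_mono (Gv1_subset_Ge hϖ hk) _
  have part3 : ∀ w₀ ∈ regionInfty F ϖ, orb F (Ge F ϖ k) w₀ = orb F (Gv0 F ϖ k) w₀ := by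
    intro w₀ hw₀
    apply Set.Subset.antisymm
    · rintro w ⟨g, hg, rfl⟩
      exact discInf_mem_orbGv0 hϖ hk hw₀ (moeb_Ge_inf hϖ hk hg hw₀)
    · exact orb_mono (Gv0_subset_Ge hϖ hk) _
  refine ⟨?_, part2, part3⟩
  rintro D ⟨z, rfl⟩
  cases z with
  | none =>
    left
    rw [part3 Option.none (Or.inl rfl)]
    exact ⟨Option.none, rfl⟩
  | some z₀ =>
    by_cases h : ‖z₀‖ ≤ 1
    · right
      rw [part2 z₀ h]
      exact ⟨Option.some z₀, rfl⟩
    · left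
      push_neg at h
      have hinv : ‖z₀⁻¹‖ ≤ ‖ϖ‖ := hϖ.2.2 _ (by rw [norm_inv]; exact inv_lt_one_of_one_lt₀ h)
      have hz : ‖ϖ‖⁻¹ ≤ ‖z₀‖ := by
        rw [norm_inv] at hinv
        have h0 : (0 : ℝ) < ‖z₀‖⁻¹ := by positivity
        have := inv_anti₀ h0 hinv
        rwa [inv_inv] at this
      rw [part3 (Option.some z₀) (Or.inr ⟨z₀, rfl, hz⟩)]
      exact ⟨Option.some z₀, rfl⟩
end
end

section
/- Given any point z ∈ P^1(F), the collection of all subsets of P^1(F) that arise as an orbit of some conjugate g G_{v0}(k) g^{-1} (g ∈ GL_2(F)) containing z forms a fundamental system of compact open neighborhoods of z. In particular, for z = 0 the discs B_z(0, |ϖ|^{k+n}) for n ≥ 1 are orbits of the groups G_{v_n}(k) = diag(1,ϖ^n) G_{v0}(k) diag(1,ϖ^n)^{-1}, and they form a neighborhood basis of 0. -/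
open Matrix Pointwise
open scoped OnePoint

noncomputable section

open scoped Classical in
/-- The right Möbius action on `ℙ¹(F)`, modelled as the one-point compactification
`OnePoint F` of `F` (so that it carries its natural topology). -/
def moebP (F : Type*) [Field F] (g : Matrix (Fin 2) (Fin 2) F) : OnePoint F → OnePoint F
  | Option.some z => if g 0 1 * z + g 1 1 = 0 then (∞ : OnePoint F)
      else (((g 0 0 * z + g 1 0) / (g 0 1 * z + g 1 1) : F) : OnePoint F)
  | Option.none => if g 0 1 = 0 then (∞ : OnePoint F) else ((g 0 0 / g 0 1 : F) : OnePoint F)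

/-- The orbit of `z ∈ ℙ¹(F)` under a set `S ⊆ GL₂(F)` of Möbius transformations. -/
def orbP (F : Type*) [Field F] (S : Set (GL (Fin 2) F)) (z : OnePoint F) :
    Set (OnePoint F) :=
  {w | ∃ g ∈ S, moebP F (g : Matrix (Fin 2) (Fin 2) F) z = w}

/-- `D` is an orbit of `S` on `ℙ¹(F)`. -/
def IsOrbitP (F : Type*) [Field F] (S : Set (GL (Fin 2) F)) (D : Set (OnePoint F)) : Prop :=
  ∃ z, D = orbP F S z


namespace Aux
open scoped Classical
section FieldPart
variable {F : Type*} [Field F]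

lemma moebP_some (g : Matrix (Fin 2) (Fin 2) F) (z : F) :
    moebP F g (z : OnePoint F) = if g 0 1 * z + g 1 1 = 0 then (∞ : OnePoint F)
      else (((g 0 0 * z + g 1 0) / (g 0 1 * z + g 1 1) : F) : OnePoint F) := rfl

lemma moebP_infty (g : Matrix (Fin 2) (Fin 2) F) :
    moebP F g (∞ : OnePoint F) = if g 0 1 = 0 then (∞ : OnePoint F)
      else ((g 0 0 / g 0 1 : F) : OnePoint F) := rfl

lemma coe_mk (A : Matrix (Fin 2) (Fin 2) F) (hA : A.det ≠ 0) :
    ((Matrix.GeneralLinearGroup.mkOfDetNeZero A hA : GL (Fin 2) F)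
      : Matrix (Fin 2) (Fin 2) F) = A := rfl

lemma moebP_affine_some (a c d : F) (hd : d ≠ 0) (z : F) :
    moebP F !![a, 0; c, d] (z : OnePoint F) = (((a * z + c) / d : F) : OnePoint F) := by
  rw [moebP_some]
  simp [hd]

lemma moebP_affine_infty (a c d : F) :
    moebP F !![a, 0; c, d] (∞ : OnePoint F) = (∞ : OnePoint F) := by
  rw [moebP_infty]; simp

lemma moebP_w_coe (z : F) (hz : z ≠ 0) :
    moebP F !![(0:F), 1; 1, 0] (z : OnePoint F) = ((z⁻¹ : F) : OnePoint F) := by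
  rw [moebP_some]
  have h1 : (!![(0:F), 1; 1, 0]) 0 1 * z + (!![(0:F), 1; 1, 0]) 1 1 = z := by simp
  rw [h1, if_neg hz]
  congr 1
  simp [one_div]

lemma moebP_w_zero : moebP F !![(0:F), 1; 1, 0] ((0 : F) : OnePoint F) = (∞ : OnePoint F) := by
  rw [moebP_some]; simp

lemma moebP_w_infty : moebP F !![(0:F), 1; 1, 0] (∞ : OnePoint F) = ((0 : F) : OnePoint F) := by
  rw [moebP_infty]; simp

lemma moebP_affine_preimage (a c d : F) (hd : d ≠ 0) (S : Set F) :
    moebP F !![a, 0; c, d] ⁻¹' ((fun x : F => (x : OnePoint F)) '' S)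
      = (fun x : F => (x : OnePoint F)) '' ((fun z : F => (a * z + c) / d) ⁻¹' S) := by
  ext w
  cases w with
  | infty =>
    simp only [Set.mem_preimage, moebP_affine_infty]
    simp [OnePoint.infty_notMem_image_coe]
  | coe z =>
    simp only [Set.mem_preimage, moebP_affine_some a c d hd z]
    rw [OnePoint.coe_injective.mem_set_image, OnePoint.coe_injective.mem_set_image]
    rfl

lemma moeb_mul (A B : Matrix (Fin 2) (Fin 2) F) (hA : A.det ≠ 0) (z : OnePoint F) :
    moebP F (A * B) z = moebP F B (moebP F A z) := by
  have hdet : A 0 0 * A 1 1 - A 0 1 * A 1 0 ≠ 0 := by rwa [Matrix.det_fin_two] at hA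
  have hm : ∀ i j, (A * B) i j = A i 0 * B 0 j + A i 1 * B 1 j := by
    intro i j; simp [Matrix.mul_apply, Fin.sum_univ_two]
  cases z with
  | coe z =>
    set N := A 0 0 * z + A 1 0 with hN
    set D := A 0 1 * z + A 1 1 with hD
    have hkey : ¬ (N = 0 ∧ D = 0) := by
      rintro ⟨h1, h2⟩
      apply hdet
      have e1 : A 1 0 = -(A 0 0 * z) := by linear_combination h1
      have e2 : A 1 1 = -(A 0 1 * z) := by linear_combination h2
      rw [e1, e2]; ring
    have hld : (A * B) 0 1 * z + (A * B) 1 1 = B 0 1 * N + B 1 1 * D := by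
      rw [hm, hm]; ring
    have hln : (A * B) 0 0 * z + (A * B) 1 0 = B 0 0 * N + B 1 0 * D := by
      rw [hm, hm]; ring
    rw [moebP_some, moebP_some, hld, hln]
    by_cases hD0 : D = 0
    · have hN0 : N ≠ 0 := fun h => hkey ⟨h, hD0⟩
      rw [if_pos hD0, moebP_infty]
      by_cases hB : B 0 1 = 0
      · rw [if_pos (by rw [hD0, hB]; ring), if_pos hB]
      · rw [if_neg (by rw [hD0]; simpa [hN0] using mul_ne_zero hB hN0), if_neg hB]
        rw [hD0]
        congr 1
        field_simp
        ring
    · rw [if_neg hD0, moebP_some]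
      have harr : B 0 1 * (N / D) + B 1 1 = (B 0 1 * N + B 1 1 * D) / D := by
        field_simp
      by_cases hden : B 0 1 * N + B 1 1 * D = 0
      · rw [if_pos hden, if_pos (by rw [harr, hden, zero_div])]
      · rw [if_neg hden, if_neg (by rw [harr]; exact div_ne_zero hden hD0)]
        congr 1
        rw [harr, div_div_eq_mul_div]
        congr 1
        rw [add_mul, mul_assoc, div_mul_cancel₀ _ hD0]
  | infty =>
    rw [moebP_infty, moebP_infty]
    by_cases hA01 : A 0 1 = 0
    · have hA00 : A 0 0 ≠ 0 := by
        intro h; apply hdet; rw [h, hA01]; ring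
      rw [if_pos hA01, moebP_infty]
      by_cases hB : B 0 1 = 0
      · rw [if_pos (by rw [hm, hA01, hB]; ring), if_pos hB]
      · rw [if_neg (by rw [hm, hA01]; simpa using mul_ne_zero hA00 hB), if_neg hB]
        rw [hm, hm, hA01]
        congr 1
        field_simp
        ring
    · rw [if_neg hA01, moebP_some]
      have harr : B 0 1 * (A 0 0 / A 0 1) + B 1 1
          = (A 0 0 * B 0 1 + A 0 1 * B 1 1) / A 0 1 := by field_simp
      by_cases hden : A 0 0 * B 0 1 + A 0 1 * B 1 1 = 0
      · rw [if_pos (by rw [hm]; exact hden), if_pos (by rw [harr, hden, zero_div])]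
      · rw [if_neg (by rw [hm]; exact hden), if_neg (by rw [harr]; exact div_ne_zero hden hA01)]
        rw [hm, hm]
        congr 1
        rw [harr]
        field_simp


lemma GL_det_ne (h : GL (Fin 2) F) : ((h : Matrix (Fin 2) (Fin 2) F)).det ≠ 0 :=
  ((Matrix.isUnit_iff_isUnit_det _).mp h.isUnit).ne_zero


lemma moebP_one' (z : OnePoint F) : moebP F (1 : Matrix (Fin 2) (Fin 2) F) z = z := by
  cases z with
  | infty => simp [moebP_infty, Matrix.one_apply]
  | coe z => simp [moebP_some, Matrix.one_apply]

lemma moebP_GL_mul (g h : GL (Fin 2) F) (z : OnePoint F) :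
    moebP F ((g * h : GL (Fin 2) F) : Matrix (Fin 2) (Fin 2) F) z
      = moebP F (h : Matrix (Fin 2) (Fin 2) F) (moebP F (g : Matrix (Fin 2) (Fin 2) F) z) := by
  rw [Units.val_mul, moeb_mul _ _ (GL_det_ne g)]

lemma moebP_GL_inv_left (h : GL (Fin 2) F) (z : OnePoint F) :
    moebP F ((h : Matrix (Fin 2) (Fin 2) F)) (moebP F ((h⁻¹ : GL (Fin 2) F) : Matrix (Fin 2) (Fin 2) F) z) = z := by
  have h1 := moebP_GL_mul h⁻¹ h z
  rw [inv_mul_cancel, Units.val_one, moebP_one'] at h1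
  exact h1.symm

lemma moebP_GL_inv_right (h : GL (Fin 2) F) (z : OnePoint F) :
    moebP F ((h⁻¹ : GL (Fin 2) F) : Matrix (Fin 2) (Fin 2) F) (moebP F ((h : GL (Fin 2) F) : Matrix (Fin 2) (Fin 2) F) z) = z := by
  have h1 := moebP_GL_mul h h⁻¹ z
  rw [mul_inv_cancel, Units.val_one, moebP_one'] at h1
  exact h1.symm

lemma orbP_conj (h : GL (Fin 2) F) (S : Set (GL (Fin 2) F)) (z : OnePoint F) :
    orbP F (conjSet F h S) z
      = moebP F (h : Matrix (Fin 2) (Fin 2) F) ⁻¹'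
          orbP F S (moebP F (h : Matrix (Fin 2) (Fin 2) F) z) := by
  ext w
  constructor
  · rintro ⟨g', ⟨g, hg, rfl⟩, rfl⟩
    refine ⟨g, hg, ?_⟩
    dsimp only
    rw [moebP_GL_mul (h * g) h⁻¹ z, moebP_GL_inv_left, moebP_GL_mul h g z]
  · rintro ⟨g, hg, hgw⟩
    refine ⟨h * g * h⁻¹, ⟨g, hg, rfl⟩, ?_⟩
    rw [moebP_GL_mul (h * g) h⁻¹ z, moebP_GL_mul h g z, hgw, moebP_GL_inv_right]

end FieldPart

section NormedPart
variable {F : Type*} [NormedField F] [IsUltrametricDist F]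

lemma norm_eq_of_sub_lt {x c : F} (h : ‖x - c‖ < ‖c‖) : ‖x‖ = ‖c‖ := by
  have h1 : ‖x‖ ≤ ‖c‖ := by
    have := IsUltrametricDist.norm_add_le_max (x - c) c
    simpa using this.trans (max_le h.le le_rfl)
  have h2 : ‖c‖ ≤ ‖x‖ := by
    have := IsUltrametricDist.norm_add_le_max x (c - x)
    rw [add_sub_cancel] at this
    rcases max_cases ‖x‖ ‖c - x‖ with ⟨he, _⟩ | ⟨he, _⟩
    · rwa [he] at this
    · rw [he] at this
      rw [← neg_sub x c, norm_neg] at this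
      exact absurd (lt_of_le_of_lt this h) (lt_irrefl _)
  exact le_antisymm h1 h2

lemma affine_preimage_closedBall (a c d : F) (ha : a ≠ 0) (hd : d ≠ 0) (c₀ : F) (r : ℝ) :
    (fun z : F => (a * z + c) / d) ⁻¹' Metric.closedBall c₀ r
      = Metric.closedBall ((d * c₀ - c) / a) (r * ‖d‖ / ‖a‖) := by
  ext z
  have ha' : (0:ℝ) < ‖a‖ := norm_pos_iff.mpr ha
  have hd' : (0:ℝ) < ‖d‖ := norm_pos_iff.mpr hd
  have key : (a * z + c) / d - c₀ = a / d * (z - (d * c₀ - c) / a) := by field_simp; ring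
  simp only [Set.mem_preimage, Metric.mem_closedBall, dist_eq_norm, key, norm_mul, norm_div]
  rw [div_mul_eq_mul_div, div_le_iff₀ hd', le_div_iff₀ ha', mul_comm]

lemma affine_preimage_ball (a c d : F) (ha : a ≠ 0) (hd : d ≠ 0) (c₀ : F) (r : ℝ) :
    (fun z : F => (a * z + c) / d) ⁻¹' Metric.ball c₀ r
      = Metric.ball ((d * c₀ - c) / a) (r * ‖d‖ / ‖a‖) := by
  ext z
  have ha' : (0:ℝ) < ‖a‖ := norm_pos_iff.mpr ha
  have hd' : (0:ℝ) < ‖d‖ := norm_pos_iff.mpr hd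
  have key : (a * z + c) / d - c₀ = a / d * (z - (d * c₀ - c) / a) := by field_simp; ring
  simp only [Set.mem_preimage, Metric.mem_ball, dist_eq_norm, key, norm_mul, norm_div]
  rw [div_mul_eq_mul_div, div_lt_iff₀ hd', lt_div_iff₀ ha', mul_comm]

def MyDisc (F : Type*) [NormedField F] (D : Set (OnePoint F)) : Prop :=
  (∃ (c : F) (r : ℝ), 0 < r ∧ D = (fun x : F => (x : OnePoint F)) '' Metric.closedBall c r) ∨
  (∃ (c : F) (r : ℝ), 0 < r ∧ D = ((fun x : F => (x : OnePoint F)) '' Metric.ball c r)ᶜ)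

lemma mem_closedBall_ultra (c : F) (r : ℝ) (hc : ‖c‖ ≤ r) (x : F) :
    x ∈ Metric.closedBall c r ↔ ‖x‖ ≤ r := by
  simp only [Metric.mem_closedBall, dist_eq_norm]
  constructor
  · intro h
    calc ‖x‖ = ‖x - c + c‖ := by ring_nf
      _ ≤ max ‖x - c‖ ‖c‖ := IsUltrametricDist.norm_add_le_max _ _
      _ ≤ r := max_le h hc
  · intro h
    calc ‖x - c‖ ≤ max ‖x‖ ‖c‖ := by
            simpa [sub_eq_add_neg] using IsUltrametricDist.norm_add_le_max x (-c)
      _ ≤ r := max_le h hc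

lemma mem_ball_ultra (c : F) (r : ℝ) (hc : ‖c‖ < r) (x : F) :
    x ∈ Metric.ball c r ↔ ‖x‖ < r := by
  simp only [Metric.mem_ball, dist_eq_norm]
  constructor
  · intro h
    calc ‖x‖ = ‖x - c + c‖ := by ring_nf
      _ ≤ max ‖x - c‖ ‖c‖ := IsUltrametricDist.norm_add_le_max _ _
      _ < r := max_lt h hc
  · intro h
    calc ‖x - c‖ ≤ max ‖x‖ ‖c‖ := by
            simpa [sub_eq_add_neg] using IsUltrametricDist.norm_add_le_max x (-c)
      _ < r := max_lt h hc

lemma inv_preimage_closedBall_small (c : F) (r : ℝ) (hr : 0 < r) (hc : ‖c‖ ≤ r) :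
    moebP F !![(0:F), 1; 1, 0] ⁻¹' ((fun x : F => (x : OnePoint F)) '' Metric.closedBall c r)
      = ((fun x : F => (x : OnePoint F)) '' Metric.ball 0 r⁻¹)ᶜ := by
  ext w
  cases w with
  | infty =>
    simp only [Set.mem_preimage, moebP_w_infty, Set.mem_compl_iff]
    rw [OnePoint.coe_injective.mem_set_image, mem_closedBall_ultra c r hc]
    simp [OnePoint.infty_notMem_image_coe, hr.le]
  | coe z =>
    by_cases hz : z = 0
    · subst hz
      simp only [Set.mem_preimage, moebP_w_zero, Set.mem_compl_iff]
      rw [OnePoint.coe_injective.mem_set_image]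
      simp [OnePoint.infty_notMem_image_coe, Metric.mem_ball, dist_eq_norm, inv_pos.mpr hr]
    · simp only [Set.mem_preimage, moebP_w_coe z hz, Set.mem_compl_iff]
      rw [OnePoint.coe_injective.mem_set_image, OnePoint.coe_injective.mem_set_image,
        mem_closedBall_ultra c r hc]
      have hz' : (0:ℝ) < ‖z‖ := norm_pos_iff.mpr hz
      rw [norm_inv, Metric.mem_ball, dist_zero_right, not_lt, inv_le_comm₀ hz' hr]

lemma inv_preimage_ball_small (c : F) (r : ℝ) (hr : 0 < r) (hc : ‖c‖ < r) :
    moebP F !![(0:F), 1; 1, 0] ⁻¹' ((fun x : F => (x : OnePoint F)) '' Metric.ball c r)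
      = ((fun x : F => (x : OnePoint F)) '' Metric.closedBall 0 r⁻¹)ᶜ := by
  ext w
  cases w with
  | infty =>
    simp only [Set.mem_preimage, moebP_w_infty, Set.mem_compl_iff]
    rw [OnePoint.coe_injective.mem_set_image, mem_ball_ultra c r hc]
    simp [OnePoint.infty_notMem_image_coe, hr]
  | coe z =>
    by_cases hz : z = 0
    · subst hz
      simp only [Set.mem_preimage, moebP_w_zero, Set.mem_compl_iff]
      rw [OnePoint.coe_injective.mem_set_image]
      simp [OnePoint.infty_notMem_image_coe, Metric.mem_closedBall, dist_eq_norm,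
        (inv_pos.mpr hr).le]
    · simp only [Set.mem_preimage, moebP_w_coe z hz, Set.mem_compl_iff]
      rw [OnePoint.coe_injective.mem_set_image, OnePoint.coe_injective.mem_set_image,
        mem_ball_ultra c r hc]
      have hz' : (0:ℝ) < ‖z‖ := norm_pos_iff.mpr hz
      rw [norm_inv, Metric.mem_closedBall, dist_zero_right, not_le, inv_lt_comm₀ hz' hr]

lemma norm_scale_inv (c z : F) (hc : c ≠ 0) (hz : z ≠ 0) :
    ‖z⁻¹ - c‖ = ‖c‖ / ‖z‖ * ‖z - c⁻¹‖ := by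
  have key : z⁻¹ - c = -(c / z) * (z - c⁻¹) := by field_simp; ring
  rw [key, norm_mul, norm_neg, norm_div]

lemma inv_preimage_closedBall_big (c : F) (r : ℝ) (hr : 0 < r) (hc : r < ‖c‖) :
    moebP F !![(0:F), 1; 1, 0] ⁻¹' ((fun x : F => (x : OnePoint F)) '' Metric.closedBall c r)
      = (fun x : F => (x : OnePoint F)) '' Metric.closedBall c⁻¹ (r / ‖c‖ ^ 2) := by
  have hcn : (0:ℝ) < ‖c‖ := hr.trans hc
  have hc0 : c ≠ 0 := norm_pos_iff.mp hcn
  ext w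
  cases w with
  | infty =>
    simp only [Set.mem_preimage, moebP_w_infty]
    rw [OnePoint.coe_injective.mem_set_image]
    simp only [Metric.mem_closedBall, dist_eq_norm, zero_sub, norm_neg]
    constructor
    · intro h; exact absurd (lt_of_le_of_lt h hc) (lt_irrefl _)
    · intro h; exact absurd h (OnePoint.infty_notMem_image_coe)
  | coe z =>
    by_cases hz : z = 0
    · subst hz
      simp only [Set.mem_preimage, moebP_w_zero]
      constructor
      · intro h; exact absurd h (OnePoint.infty_notMem_image_coe)
      · intro h
        rw [OnePoint.coe_injective.mem_set_image] at h
        simp only [Metric.mem_closedBall, dist_eq_norm, zero_sub, norm_neg, norm_inv] at h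
        have : r / ‖c‖ ^ 2 < ‖c‖⁻¹ := by
          rw [div_lt_iff₀ (by positivity), sq]
          calc r < ‖c‖ := hc
            _ = ‖c‖⁻¹ * (‖c‖ * ‖c‖) := by field_simp
        exact absurd (lt_of_le_of_lt h this) (lt_irrefl _)
    · simp only [Set.mem_preimage, moebP_w_coe z hz]
      rw [OnePoint.coe_injective.mem_set_image, OnePoint.coe_injective.mem_set_image]
      simp only [Metric.mem_closedBall, dist_eq_norm]
      have hz' : (0:ℝ) < ‖z‖ := norm_pos_iff.mpr hz
      constructor
      · intro h
        have hninv : ‖z⁻¹‖ = ‖c‖ := norm_eq_of_sub_lt (lt_of_le_of_lt h hc)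
        have hnz : ‖z‖ = ‖c‖⁻¹ := by rw [← inv_inv ‖z‖, ← norm_inv, hninv]
        have key : ‖z⁻¹ - c‖ = ‖c‖ ^ 2 * ‖z - c⁻¹‖ := by
          rw [norm_scale_inv c z hc0 hz, hnz, div_eq_mul_inv, inv_inv, sq]
        rw [le_div_iff₀ (by positivity)]
        calc ‖z - c⁻¹‖ * ‖c‖ ^ 2 = ‖z⁻¹ - c‖ := by rw [key]; ring
          _ ≤ r := h
      · intro h
        have hrc : r / ‖c‖ ^ 2 < ‖c⁻¹‖ := by
          rw [norm_inv, div_lt_iff₀ (by positivity), sq]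
          calc r < ‖c‖ := hc
            _ = ‖c‖⁻¹ * (‖c‖ * ‖c‖) := by field_simp
        have hnz : ‖z‖ = ‖c⁻¹‖ := norm_eq_of_sub_lt (lt_of_le_of_lt h hrc)
        rw [norm_inv] at hnz
        have key : ‖z⁻¹ - c‖ = ‖c‖ ^ 2 * ‖z - c⁻¹‖ := by
          rw [norm_scale_inv c z hc0 hz, hnz, div_eq_mul_inv, inv_inv, sq]
        rw [key]
        calc ‖c‖ ^ 2 * ‖z - c⁻¹‖ ≤ ‖c‖ ^ 2 * (r / ‖c‖ ^ 2) := by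
              apply mul_le_mul_of_nonneg_left h (by positivity)
          _ = r := by field_simp

lemma inv_preimage_ball_big (c : F) (r : ℝ) (hr : 0 < r) (hc : r ≤ ‖c‖) :
    moebP F !![(0:F), 1; 1, 0] ⁻¹' ((fun x : F => (x : OnePoint F)) '' Metric.ball c r)
      = (fun x : F => (x : OnePoint F)) '' Metric.ball c⁻¹ (r / ‖c‖ ^ 2) := by
  have hcn : (0:ℝ) < ‖c‖ := hr.trans_le hc
  have hc0 : c ≠ 0 := norm_pos_iff.mp hcn
  ext w
  cases w with
  | infty =>
    simp only [Set.mem_preimage, moebP_w_infty]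
    rw [OnePoint.coe_injective.mem_set_image]
    simp only [Metric.mem_ball, dist_eq_norm, zero_sub, norm_neg]
    constructor
    · intro h; exact absurd (lt_of_lt_of_le h hc) (lt_irrefl _)
    · intro h; exact absurd h (OnePoint.infty_notMem_image_coe)
  | coe z =>
    by_cases hz : z = 0
    · subst hz
      simp only [Set.mem_preimage, moebP_w_zero]
      constructor
      · intro h; exact absurd h (OnePoint.infty_notMem_image_coe)
      · intro h
        rw [OnePoint.coe_injective.mem_set_image] at h
        simp only [Metric.mem_ball, dist_eq_norm, zero_sub, norm_neg, norm_inv] at h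
        have : r / ‖c‖ ^ 2 ≤ ‖c‖⁻¹ := by
          rw [div_le_iff₀ (by positivity), sq]
          calc r ≤ ‖c‖ := hc
            _ = ‖c‖⁻¹ * (‖c‖ * ‖c‖) := by field_simp
        exact absurd (lt_of_lt_of_le h this) (lt_irrefl _)
    · simp only [Set.mem_preimage, moebP_w_coe z hz]
      rw [OnePoint.coe_injective.mem_set_image, OnePoint.coe_injective.mem_set_image]
      simp only [Metric.mem_ball, dist_eq_norm]
      have hz' : (0:ℝ) < ‖z‖ := norm_pos_iff.mpr hz
      constructor
      · intro h
        have hninv : ‖z⁻¹‖ = ‖c‖ := norm_eq_of_sub_lt (lt_of_lt_of_le h hc)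
        have hnz : ‖z‖ = ‖c‖⁻¹ := by rw [← inv_inv ‖z‖, ← norm_inv, hninv]
        have key : ‖z⁻¹ - c‖ = ‖c‖ ^ 2 * ‖z - c⁻¹‖ := by
          rw [norm_scale_inv c z hc0 hz, hnz, div_eq_mul_inv, inv_inv, sq]
        rw [lt_div_iff₀ (by positivity)]
        calc ‖z - c⁻¹‖ * ‖c‖ ^ 2 = ‖z⁻¹ - c‖ := by rw [key]; ring
          _ < r := h
      · intro h
        have hrc : r / ‖c‖ ^ 2 ≤ ‖c⁻¹‖ := by
          rw [norm_inv, div_le_iff₀ (by positivity), sq]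
          calc r ≤ ‖c‖ := hc
            _ = ‖c‖⁻¹ * (‖c‖ * ‖c‖) := by field_simp
        have hnz : ‖z‖ = ‖c⁻¹‖ := norm_eq_of_sub_lt (lt_of_lt_of_le h hrc)
        rw [norm_inv] at hnz
        have key : ‖z⁻¹ - c‖ = ‖c‖ ^ 2 * ‖z - c⁻¹‖ := by
          rw [norm_scale_inv c z hc0 hz, hnz, div_eq_mul_inv, inv_inv, sq]
        rw [key]
        calc ‖c‖ ^ 2 * ‖z - c⁻¹‖ < ‖c‖ ^ 2 * (r / ‖c‖ ^ 2) := by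
              apply mul_lt_mul_of_pos_left h (by positivity)
          _ = r := by field_simp


lemma affine_preimage_disc (a c d : F) (ha : a ≠ 0) (hd : d ≠ 0) (D : Set (OnePoint F))
    (hD : MyDisc F D) : MyDisc F (moebP F !![a, 0; c, d] ⁻¹' D) := by
  have ha' : (0:ℝ) < ‖a‖ := norm_pos_iff.mpr ha
  have hd' : (0:ℝ) < ‖d‖ := norm_pos_iff.mpr hd
  rcases hD with ⟨c₀, r, hr, rfl⟩ | ⟨c₀, r, hr, rfl⟩
  · left
    refine ⟨(d * c₀ - c) / a, r * ‖d‖ / ‖a‖, by positivity, ?_⟩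
    rw [moebP_affine_preimage a c d hd, affine_preimage_closedBall a c d ha hd]
  · right
    refine ⟨(d * c₀ - c) / a, r * ‖d‖ / ‖a‖, by positivity, ?_⟩
    rw [Set.preimage_compl, moebP_affine_preimage a c d hd, affine_preimage_ball a c d ha hd]

lemma inv_preimage_disc (D : Set (OnePoint F)) (hD : MyDisc F D) :
    MyDisc F (moebP F !![(0:F), 1; 1, 0] ⁻¹' D) := by
  rcases hD with ⟨c₀, r, hr, rfl⟩ | ⟨c₀, r, hr, rfl⟩
  · by_cases hc : ‖c₀‖ ≤ r
    · right
      exact ⟨0, r⁻¹, inv_pos.mpr hr, inv_preimage_closedBall_small c₀ r hr hc⟩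
    · left
      push_neg at hc
      have : (0:ℝ) < ‖c₀‖ := hr.trans hc
      exact ⟨c₀⁻¹, r / ‖c₀‖ ^ 2, by positivity, inv_preimage_closedBall_big c₀ r hr hc⟩
  · rw [Set.preimage_compl]
    by_cases hc : ‖c₀‖ < r
    · left
      rw [inv_preimage_ball_small c₀ r hr hc, compl_compl]
      exact ⟨0, r⁻¹, inv_pos.mpr hr, rfl⟩
    · right
      push_neg at hc
      have : (0:ℝ) < ‖c₀‖ := hr.trans_le hc
      exact ⟨c₀⁻¹, r / ‖c₀‖ ^ 2, by positivity,
        by rw [inv_preimage_ball_big c₀ r hr hc]⟩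

lemma GL_preimage_disc (h : GL (Fin 2) F) (D : Set (OnePoint F)) (hD : MyDisc F D) :
    MyDisc F (moebP F (h : Matrix (Fin 2) (Fin 2) F) ⁻¹' D) := by
  set M : Matrix (Fin 2) (Fin 2) F := (h : Matrix (Fin 2) (Fin 2) F) with hM
  have hdet : M.det ≠ 0 := GL_det_ne h
  have hdet2 : M 0 0 * M 1 1 - M 0 1 * M 1 0 ≠ 0 := by rwa [Matrix.det_fin_two] at hdet
  by_cases hb : M 0 1 = 0
  · have ha : M 0 0 ≠ 0 := fun h0 => hdet2 (by rw [h0, hb]; ring)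
    have hd : M 1 1 ≠ 0 := fun h0 => hdet2 (by rw [h0, hb]; ring)
    have hMeq : M = !![M 0 0, 0; M 1 0, M 1 1] := by
      ext i j
      fin_cases i <;> fin_cases j <;> simp [hb]
    rw [hMeq]
    exact affine_preimage_disc _ _ _ ha hd D hD
  · -- Bruhat: M = L₁ * W * L₂
    set a := M 0 0; set b := M 0 1; set c := M 1 0; set d := M 1 1
    have hfac : M = !![b, 0; d, 1] * !![(0:F), 1; 1, 0] * !![(c * b - a * d) / b, 0; a / b, 1] := by
      ext i j
      fin_cases i <;> fin_cases j <;>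
        · simp [Matrix.mul_apply, Fin.sum_univ_two]
          try field_simp
          try ring
    have hdL1 : (!![b, 0; d, 1] : Matrix (Fin 2) (Fin 2) F).det ≠ 0 := by
      rw [Matrix.det_fin_two_of]; simpa using hb
    have hdLW : ((!![b, 0; d, 1] * !![(0:F), 1; 1, 0]) : Matrix (Fin 2) (Fin 2) F).det ≠ 0 := by
      rw [Matrix.det_mul, Matrix.det_fin_two_of, Matrix.det_fin_two_of]
      simpa using hb
    have he : (c * b - a * d) / b ≠ 0 := by
      apply div_ne_zero _ hb
      intro h0
      exact hdet2 (by linear_combination -h0)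
    have hcomp : ∀ z, moebP F M z
        = moebP F !![(c * b - a * d) / b, 0; a / b, 1]
            (moebP F !![(0:F), 1; 1, 0] (moebP F !![b, 0; d, 1] z)) := by
      intro z
      rw [hfac, moeb_mul _ _ hdLW, moeb_mul _ _ hdL1]
    have hpre : moebP F M ⁻¹' D
        = moebP F !![b, 0; d, 1] ⁻¹' (moebP F !![(0:F), 1; 1, 0] ⁻¹'
            (moebP F !![(c * b - a * d) / b, 0; a / b, 1] ⁻¹' D)) := by
      ext w
      simp [Set.mem_preimage, hcomp w]
    rw [hpre]
    exact affine_preimage_disc _ _ _ hb one_ne_zero _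
      (inv_preimage_disc _ (affine_preimage_disc _ _ _ he one_ne_zero D hD))


lemma MyDisc.compact_open [ProperSpace F] {D : Set (OnePoint F)} (hD : MyDisc F D) :
    IsCompact D ∧ IsOpen D := by
  rcases hD with ⟨c, r, hr, rfl⟩ | ⟨c, r, hr, rfl⟩
  · constructor
    · exact (isCompact_closedBall c r).image OnePoint.continuous_coe
    · exact OnePoint.isOpen_image_coe.2 (IsUltrametricDist.isOpen_closedBall c hr.ne')
  · constructor
    · apply IsClosed.isCompact
      rw [isClosed_compl_iff]
      exact OnePoint.isOpen_image_coe.2 Metric.isOpen_ball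
    · apply OnePoint.isOpen_compl_image_coe.2
      exact ⟨IsUltrametricDist.isClosed_ball c r,
        (isCompact_closedBall c r).of_isClosed_subset (IsUltrametricDist.isClosed_ball c r)
          Metric.ball_subset_closedBall⟩

end NormedPart
end Aux


namespace Aux
open scoped Classical
section Orbits
variable {F : Type*} [NormedField F] [IsUltrametricDist F]

lemma add_le_ultra {p q : F} {e : ℝ} (hp : ‖p‖ ≤ e) (hq : ‖q‖ ≤ e) : ‖p + q‖ ≤ e :=
  (IsUltrametricDist.norm_add_le_max p q).trans (max_le hp hq)

lemma orbP_Gv0_small (ϖ : F) (hϖ : IsUniformizer F ϖ) (k : ℕ) (hk : 1 ≤ k)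
    (y : F) (hy : ‖y‖ ≤ 1) :
    orbP F (Gv0 F ϖ k) (y : OnePoint F)
      = (fun x : F => (x : OnePoint F)) '' Metric.closedBall y (‖ϖ‖ ^ k) := by
  have hϖpos : (0:ℝ) < ‖ϖ‖ := norm_pos_iff.mpr hϖ.1
  have hε : (0:ℝ) < ‖ϖ‖ ^ k := by positivity
  have hεlt : ‖ϖ‖ ^ k < 1 := pow_lt_one₀ (norm_nonneg _) hϖ.2.1 (by omega)
  ext w
  constructor
  · rintro ⟨g, ⟨h1, h2, h3, h4⟩, rfl⟩
    set M : Matrix (Fin 2) (Fin 2) F := (g : Matrix (Fin 2) (Fin 2) F) with hM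
    have hden1 : ‖M 0 1 * y + M 1 1 - 1‖ ≤ ‖ϖ‖ ^ k := by
      have : M 0 1 * y + M 1 1 - 1 = M 0 1 * y + (M 1 1 - 1) := by ring
      rw [this]
      refine add_le_ultra ?_ h4
      calc ‖M 0 1 * y‖ = ‖M 0 1‖ * ‖y‖ := norm_mul _ _
        _ ≤ ‖ϖ‖ ^ k * 1 := mul_le_mul h2 hy (norm_nonneg _) hε.le
        _ = ‖ϖ‖ ^ k := mul_one _
    have hden : ‖M 0 1 * y + M 1 1‖ = 1 := by
      have := norm_eq_of_sub_lt (c := (1:F))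
        (x := M 0 1 * y + M 1 1) (by rw [norm_one]; exact lt_of_le_of_lt hden1 hεlt)
      rwa [norm_one] at this
    have hden0 : M 0 1 * y + M 1 1 ≠ 0 := by
      intro h0; rw [h0, norm_zero] at hden; exact zero_ne_one hden
    rw [moebP_some, if_neg hden0]
    refine ⟨(M 0 0 * y + M 1 0) / (M 0 1 * y + M 1 1), ?_, rfl⟩
    rw [Metric.mem_closedBall, dist_eq_norm]
    have hrew : (M 0 0 * y + M 1 0) / (M 0 1 * y + M 1 1) - y
        = (M 0 0 * y + M 1 0 - y * (M 0 1 * y + M 1 1)) / (M 0 1 * y + M 1 1) := by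
      rw [eq_div_iff hden0, sub_mul, div_mul_cancel₀ _ hden0]
    rw [hrew, norm_div, hden, div_one]
    have hsplit : M 0 0 * y + M 1 0 - y * (M 0 1 * y + M 1 1)
        = ((M 0 0 - 1) * y + M 1 0) + (-(M 0 1 * (y * y)) + -((M 1 1 - 1) * y)) := by ring
    rw [hsplit]
    have hterm : ∀ p : F, ‖p‖ ≤ ‖ϖ‖ ^ k → ‖p * y‖ ≤ ‖ϖ‖ ^ k := by
      intro p hp
      calc ‖p * y‖ = ‖p‖ * ‖y‖ := norm_mul _ _
        _ ≤ ‖ϖ‖ ^ k * 1 := mul_le_mul hp hy (norm_nonneg _) hε.le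
        _ = ‖ϖ‖ ^ k := mul_one _
    refine add_le_ultra (add_le_ultra (hterm _ h1) h3) (add_le_ultra ?_ ?_)
    · rw [norm_neg, show M 0 1 * (y * y) = (M 0 1 * y) * y by ring]
      exact hterm _ (hterm _ h2)
    · rw [norm_neg]; exact hterm _ h4
  · rintro ⟨w, hw, rfl⟩
    rw [Metric.mem_closedBall, dist_eq_norm] at hw
    refine ⟨Matrix.GeneralLinearGroup.mkOfDetNeZero !![1, 0; w - y, 1]
      (by rw [Matrix.det_fin_two_of]; simp), ?_, ?_⟩
    · refine ⟨?_, ?_, ?_, ?_⟩ <;> simp [coe_mk, hε.le, hw]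
    · rw [coe_mk, moebP_some]
      rw [if_neg (by simp)]
      simp only [OnePoint.coe_eq_coe]
      have h1 : (!![1, 0; w - y, 1] : Matrix (Fin 2) (Fin 2) F) 0 0 * y
          + !![1, 0; w - y, 1] 1 0 = w := by simp
      have h2 : (!![1, 0; w - y, 1] : Matrix (Fin 2) (Fin 2) F) 0 1 * y
          + !![1, 0; w - y, 1] 1 1 = 1 := by simp
      rw [h1, h2, div_one]

lemma orbP_Gv0_infty (ϖ : F) (hϖ : IsUniformizer F ϖ) (k : ℕ) (hk : 1 ≤ k) :
    orbP F (Gv0 F ϖ k) (∞ : OnePoint F)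
      = ((fun x : F => (x : OnePoint F)) '' Metric.ball 0 ((‖ϖ‖ ^ k)⁻¹))ᶜ := by
  have hϖpos : (0:ℝ) < ‖ϖ‖ := norm_pos_iff.mpr hϖ.1
  have hε : (0:ℝ) < ‖ϖ‖ ^ k := by positivity
  have hεlt : ‖ϖ‖ ^ k < 1 := pow_lt_one₀ (norm_nonneg _) hϖ.2.1 (by omega)
  ext w
  constructor
  · rintro ⟨g, ⟨h1, h2, h3, h4⟩, rfl⟩
    set M : Matrix (Fin 2) (Fin 2) F := (g : Matrix (Fin 2) (Fin 2) F) with hM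
    rw [moebP_infty]
    by_cases hb : M 0 1 = 0
    · rw [if_pos hb]
      exact OnePoint.infty_notMem_image_coe
    · rw [if_neg hb]
      intro hmem
      rw [OnePoint.coe_injective.mem_set_image, Metric.mem_ball, dist_zero_right] at hmem
      have hM00 : ‖M 0 0‖ = 1 := by
        have := norm_eq_of_sub_lt (c := (1:F)) (x := M 0 0)
          (by rw [norm_one]; exact lt_of_le_of_lt h1 hεlt)
        rwa [norm_one] at this
      have hMb : (0:ℝ) < ‖M 0 1‖ := norm_pos_iff.mpr hb
      have : (‖ϖ‖ ^ k)⁻¹ ≤ ‖M 0 0 / M 0 1‖ := by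
        rw [norm_div, hM00]
        rw [inv_le_comm₀ hε (by positivity)]
        simpa [one_div] using h2
      exact absurd hmem (not_lt.mpr this)
  · intro hw
    cases w with
    | infty =>
      refine ⟨1, ?_, ?_⟩
      · refine ⟨?_, ?_, ?_, ?_⟩ <;> simp [Units.val_one, Matrix.one_apply, hε.le]
      · rw [Units.val_one, moebP_infty, if_pos (by simp [Matrix.one_apply])]
    | coe w =>
      rw [Set.mem_compl_iff, OnePoint.coe_injective.mem_set_image, Metric.mem_ball,
        dist_zero_right, not_lt] at hw
      have hw0 : w ≠ 0 := by
        intro h0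
        rw [h0, norm_zero] at hw
        exact absurd (lt_of_lt_of_le (inv_pos.mpr hε) hw) (lt_irrefl _)
      have hwinv : ‖w‖⁻¹ ≤ ‖ϖ‖ ^ k := by
        rw [inv_le_comm₀ (norm_pos_iff.mpr hw0) hε]
        exact hw
      refine ⟨Matrix.GeneralLinearGroup.mkOfDetNeZero !![1, w⁻¹; 0, 1]
        (by rw [Matrix.det_fin_two_of]; simp), ?_, ?_⟩
      · refine ⟨?_, ?_, ?_, ?_⟩ <;> simp [coe_mk, hε.le, hwinv]
      · rw [coe_mk, moebP_infty]
        rw [if_neg (by simpa using inv_ne_zero hw0)]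
        simp only [OnePoint.coe_eq_coe]
        have h1 : (!![1, w⁻¹; 0, 1] : Matrix (Fin 2) (Fin 2) F) 0 0 = 1 := by simp
        have h2 : (!![1, w⁻¹; 0, 1] : Matrix (Fin 2) (Fin 2) F) 0 1 = w⁻¹ := by simp
        rw [h1, h2, one_div, inv_inv]
end Orbits
end Aux


namespace Aux
open scoped Classical
section Orbits2
variable {F : Type*} [NormedField F] [IsUltrametricDist F]

/-- The Weyl element. -/
def wGL (F : Type*) [Field F] : GL (Fin 2) F :=
  Matrix.GeneralLinearGroup.mkOfDetNeZero !![(0:F), 1; 1, 0]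
    (by rw [Matrix.det_fin_two_of]; simp)

lemma wGL_coe : ((wGL F : GL (Fin 2) F) : Matrix (Fin 2) (Fin 2) F) = !![(0:F), 1; 1, 0] := rfl

lemma wGL_mul_self : (wGL F) * (wGL F) = 1 := by
  apply Units.ext
  rw [Units.val_mul, wGL_coe, Units.val_one]
  ext i j
  fin_cases i <;> fin_cases j <;> simp [Matrix.mul_apply, Fin.sum_univ_two, Matrix.one_apply]

lemma wGL_inv : (wGL F)⁻¹ = wGL F := inv_eq_of_mul_eq_one_right wGL_mul_self

lemma wGL_conj_mem (ϖ : F) (k : ℕ) (g : GL (Fin 2) F) (hg : g ∈ Gv0 F ϖ k) :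
    (wGL F) * g * (wGL F)⁻¹ ∈ Gv0 F ϖ k := by
  obtain ⟨h1, h2, h3, h4⟩ := hg
  rw [wGL_inv]
  have hent : ((((wGL F) * g * (wGL F) : GL (Fin 2) F)) : Matrix (Fin 2) (Fin 2) F)
      = !![(g : Matrix (Fin 2) (Fin 2) F) 1 1, (g : Matrix (Fin 2) (Fin 2) F) 1 0;
           (g : Matrix (Fin 2) (Fin 2) F) 0 1, (g : Matrix (Fin 2) (Fin 2) F) 0 0] := by
    rw [Units.val_mul, Units.val_mul, wGL_coe]
    ext i j
    fin_cases i <;> fin_cases j <;>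
      simp [Matrix.mul_apply, Matrix.vecMul, dotProduct, Fin.sum_univ_two, Matrix.vecHead, Matrix.vecTail]
  show _ ∧ _ ∧ _ ∧ _
  rw [hent]
  refine ⟨by simpa using h4, by simpa using h3, by simpa using h2, by simpa using h1⟩

lemma wGL_conj_Gv0 (ϖ : F) (k : ℕ) : conjSet F (wGL F) (Gv0 F ϖ k) = Gv0 F ϖ k := by
  ext g
  constructor
  · rintro ⟨g₀, hg₀, rfl⟩
    exact wGL_conj_mem ϖ k g₀ hg₀
  · intro hg
    refine ⟨(wGL F)⁻¹ * g * wGL F, ?_, by group⟩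
    have : (wGL F)⁻¹ * g * wGL F = (wGL F) * g * (wGL F)⁻¹ := by rw [wGL_inv]
    rw [this]
    exact wGL_conj_mem ϖ k g hg

lemma orbP_Gv0_disc (ϖ : F) (hϖ : IsUniformizer F ϖ) (k : ℕ) (hk : 1 ≤ k) (y : OnePoint F) :
    MyDisc F (orbP F (Gv0 F ϖ k) y) := by
  have hϖpos : (0:ℝ) < ‖ϖ‖ := norm_pos_iff.mpr hϖ.1
  have hε : (0:ℝ) < ‖ϖ‖ ^ k := by positivity
  cases y with
  | infty =>
    rw [orbP_Gv0_infty ϖ hϖ k hk]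
    exact Or.inr ⟨0, (‖ϖ‖ ^ k)⁻¹, inv_pos.mpr hε, rfl⟩
  | coe y₀ =>
    by_cases hy : ‖y₀‖ ≤ 1
    · rw [orbP_Gv0_small ϖ hϖ k hk y₀ hy]
      exact Or.inl ⟨y₀, ‖ϖ‖ ^ k, hε, rfl⟩
    · push_neg at hy
      have hy0 : y₀ ≠ 0 := by
        intro h0; rw [h0, norm_zero] at hy; exact absurd (zero_lt_one.trans hy) (lt_irrefl _)
      have step : orbP F (Gv0 F ϖ k) (y₀ : OnePoint F)
          = moebP F ((wGL F : GL (Fin 2) F) : Matrix (Fin 2) (Fin 2) F) ⁻¹'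
              orbP F (Gv0 F ϖ k)
                (moebP F ((wGL F : GL (Fin 2) F) : Matrix (Fin 2) (Fin 2) F) (y₀ : OnePoint F)) := by
        conv_lhs => rw [← wGL_conj_Gv0 ϖ k]
        exact orbP_conj (wGL F) (Gv0 F ϖ k) _
      rw [step, wGL_coe, moebP_w_coe y₀ hy0]
      have hyinv : ‖y₀⁻¹‖ ≤ 1 := by
        rw [norm_inv]
        exact inv_le_one_of_one_le₀ hy.le
      rw [orbP_Gv0_small ϖ hϖ k hk y₀⁻¹ hyinv]
      exact inv_preimage_disc _ (Or.inl ⟨y₀⁻¹, ‖ϖ‖ ^ k, hε, rfl⟩)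

lemma orbit_disc (ϖ : F) (hϖ : IsUniformizer F ϖ) (k : ℕ) (hk : 1 ≤ k)
    (h : GL (Fin 2) F) (y : OnePoint F) :
    MyDisc F (orbP F (conjSet F h (Gv0 F ϖ k)) y) := by
  rw [orbP_conj]
  exact GL_preimage_disc h _ (orbP_Gv0_disc ϖ hϖ k hk _)
end Orbits2
end Aux


namespace Aux
open scoped Classical
section Orbits3
variable {F : Type*} [NormedField F] [IsUltrametricDist F]

/-- Translation-and-scaling conjugator sending `z₀ ↦ 0` at scale `ϖ^m`. -/
def tmat (F : Type*) [Field F] (ϖ z₀ : F) (h : ϖ ≠ 0) (m : ℕ) : GL (Fin 2) F :=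
  Matrix.GeneralLinearGroup.mkOfDetNeZero !![(ϖ ^ m)⁻¹, 0; -z₀ * (ϖ ^ m)⁻¹, 1]
    (by rw [Matrix.det_fin_two_of]; simpa using inv_ne_zero (pow_ne_zero m h))

/-- Scaling conjugator at `∞`. -/
def smat (F : Type*) [Field F] (ϖ : F) (h : ϖ ≠ 0) (m : ℕ) : GL (Fin 2) F :=
  Matrix.GeneralLinearGroup.mkOfDetNeZero !![ϖ ^ m, 0; 0, 1]
    (by rw [Matrix.det_fin_two_of]; simpa using pow_ne_zero m h)

lemma orbit_translate (ϖ : F) (hϖ : IsUniformizer F ϖ) (k : ℕ) (hk : 1 ≤ k)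
    (z₀ : F) (m : ℕ) :
    orbP F (conjSet F (tmat F ϖ z₀ hϖ.1 m) (Gv0 F ϖ k)) (z₀ : OnePoint F)
      = (fun x : F => (x : OnePoint F)) '' Metric.closedBall z₀ (‖ϖ‖ ^ k * ‖ϖ‖ ^ m) := by
  have hpm : (ϖ ^ m : F) ≠ 0 := pow_ne_zero _ hϖ.1
  have hco : ((tmat F ϖ z₀ hϖ.1 m : GL (Fin 2) F) : Matrix (Fin 2) (Fin 2) F)
      = !![(ϖ ^ m)⁻¹, 0; -z₀ * (ϖ ^ m)⁻¹, 1] := rfl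
  rw [orbP_conj, hco, moebP_affine_some _ _ _ one_ne_zero z₀,
    show ((ϖ ^ m)⁻¹ * z₀ + -z₀ * (ϖ ^ m)⁻¹) / 1 = (0:F) by rw [div_one]; ring,
    orbP_Gv0_small ϖ hϖ k hk 0 (by simp),
    moebP_affine_preimage _ _ _ one_ne_zero,
    affine_preimage_closedBall _ _ _ (inv_ne_zero hpm) one_ne_zero]
  have hc : (1 * 0 - -z₀ * (ϖ ^ m)⁻¹) / (ϖ ^ m)⁻¹ = z₀ := by field_simp; ring
  have hrr : ‖ϖ‖ ^ k * ‖(1:F)‖ / ‖(ϖ ^ m : F)⁻¹‖ = ‖ϖ‖ ^ k * ‖ϖ‖ ^ m := by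
    rw [norm_one, mul_one, norm_inv, norm_pow, div_eq_mul_inv, inv_inv]
  rw [hc, hrr]

lemma orbit_scale_infty (ϖ : F) (hϖ : IsUniformizer F ϖ) (k : ℕ) (hk : 1 ≤ k) (m : ℕ) :
    orbP F (conjSet F (smat F ϖ hϖ.1 m) (Gv0 F ϖ k)) (∞ : OnePoint F)
      = ((fun x : F => (x : OnePoint F)) '' Metric.ball 0 ((‖ϖ‖ ^ k * ‖ϖ‖ ^ m)⁻¹))ᶜ := by
  have hpm : (ϖ ^ m : F) ≠ 0 := pow_ne_zero _ hϖ.1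
  have hco : ((smat F ϖ hϖ.1 m : GL (Fin 2) F) : Matrix (Fin 2) (Fin 2) F)
      = !![ϖ ^ m, 0; 0, 1] := rfl
  rw [orbP_conj, hco, moebP_affine_infty, orbP_Gv0_infty ϖ hϖ k hk, Set.preimage_compl,
    moebP_affine_preimage _ _ _ one_ne_zero,
    affine_preimage_ball _ _ _ hpm one_ne_zero]
  have hc : ((1:F) * 0 - 0) / ϖ ^ m = 0 := by simp
  have hrr : (‖ϖ‖ ^ k)⁻¹ * ‖(1:F)‖ / ‖(ϖ ^ m : F)‖ = (‖ϖ‖ ^ k * ‖ϖ‖ ^ m)⁻¹ := by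
    rw [norm_one, mul_one, norm_pow, div_eq_mul_inv, mul_inv]
  rw [hc, hrr]

lemma orbit_dmatN (ϖ : F) (hϖ : IsUniformizer F ϖ) (k : ℕ) (hk : 1 ≤ k) (n : ℕ) :
    orbP F (conjSet F (dmatN F ϖ hϖ.1 n) (Gv0 F ϖ k)) ((0:F) : OnePoint F)
      = (fun x : F => (x : OnePoint F)) '' Metric.closedBall 0 (‖ϖ‖ ^ k * ‖ϖ‖ ^ n) := by
  have hpm : (ϖ ^ n : F) ≠ 0 := pow_ne_zero _ hϖ.1
  have hco : ((dmatN F ϖ hϖ.1 n : GL (Fin 2) F) : Matrix (Fin 2) (Fin 2) F)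
      = !![1, 0; 0, ϖ ^ n] := rfl
  rw [orbP_conj, hco, moebP_affine_some _ _ _ hpm 0,
    show ((1:F) * 0 + 0) / ϖ ^ n = (0:F) by simp,
    orbP_Gv0_small ϖ hϖ k hk 0 (by simp),
    moebP_affine_preimage _ _ _ hpm,
    affine_preimage_closedBall _ _ _ one_ne_zero hpm]
  have hc : ((ϖ ^ n : F) * 0 - 0) / 1 = 0 := by simp
  have hrr : ‖ϖ‖ ^ k * ‖(ϖ ^ n : F)‖ / ‖(1:F)‖ = ‖ϖ‖ ^ k * ‖ϖ‖ ^ n := by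
    rw [norm_one, div_one, norm_pow]
  rw [hc, hrr]
end Orbits3
end Aux

theorem statement16 (p : ℕ) [Fact p.Prime] (F : Type*) [NontriviallyNormedField F]
    [IsUltrametricDist F] [NormedAlgebra ℚ_[p] F] [FiniteDimensional ℚ_[p] F]
    (ϖ : F) (hϖ : IsUniformizer F ϖ) (k : ℕ) (hk : 1 ≤ k) :
    (∀ z : OnePoint F,
      (∀ D : Set (OnePoint F),
        (∃ g : GL (Fin 2) F, IsOrbitP F (conjSet F g (Gv0 F ϖ k)) D) → z ∈ D →
        IsCompact D ∧ IsOpen D) ∧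
      (∀ U ∈ nhds z, ∃ D : Set (OnePoint F),
        (∃ g : GL (Fin 2) F, IsOrbitP F (conjSet F g (Gv0 F ϖ k)) D) ∧ z ∈ D ∧ D ⊆ U)) ∧
    (∀ n : ℕ, 1 ≤ n →
      IsOrbitP F (conjSet F (dmatN F ϖ hϖ.1 n) (Gv0 F ϖ k))
        ((fun x : F => (x : OnePoint F)) '' {z : F | ‖z‖ ≤ ‖ϖ‖ ^ (k + n)})) ∧
    (∀ U ∈ nhds ((0 : F) : OnePoint F), ∃ n : ℕ, 1 ≤ n ∧
      (fun x : F => (x : OnePoint F)) '' {z : F | ‖z‖ ≤ ‖ϖ‖ ^ (k + n)} ⊆ U) := by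
  classical
  haveI : ProperSpace F := FiniteDimensional.proper ℚ_[p] F
  have hϖpos : (0:ℝ) < ‖ϖ‖ := norm_pos_iff.mpr hϖ.1
  have hε : (0:ℝ) < ‖ϖ‖ ^ k := by positivity
  refine ⟨fun z => ⟨?_, ?_⟩, ?_, ?_⟩
  · rintro D ⟨g, y, rfl⟩ _
    exact (Aux.orbit_disc ϖ hϖ k hk g y).compact_open
  · intro U hU
    cases z with
    | coe z₀ =>
      have hU' : (fun x : F => (x : OnePoint F)) ⁻¹' U ∈ nhds z₀ :=
        (OnePoint.continuous_coe.continuousAt).preimage_mem_nhds hU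
      obtain ⟨δ, hδ, hball⟩ := Metric.mem_nhds_iff.mp hU'
      obtain ⟨m, hm⟩ := exists_pow_lt_of_lt_one hδ hϖ.2.1
      refine ⟨(fun x : F => (x : OnePoint F)) '' Metric.closedBall z₀ (‖ϖ‖ ^ k * ‖ϖ‖ ^ m),
        ⟨Aux.tmat F ϖ z₀ hϖ.1 m, (z₀ : OnePoint F),
          (Aux.orbit_translate ϖ hϖ k hk z₀ m).symm⟩, ?_, ?_⟩
      · exact ⟨z₀, Metric.mem_closedBall_self (by positivity), rfl⟩
      · rintro w ⟨x, hx, rfl⟩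
        apply hball
        rw [Metric.mem_ball]
        rw [Metric.mem_closedBall] at hx
        calc dist x z₀ ≤ ‖ϖ‖ ^ k * ‖ϖ‖ ^ m := hx
          _ = ‖ϖ‖ ^ (k + m) := (pow_add _ _ _).symm
          _ ≤ ‖ϖ‖ ^ m := pow_le_pow_of_le_one (norm_nonneg _) hϖ.2.1.le le_add_self
          _ < δ := hm
    | infty =>
      obtain ⟨s, ⟨hscl, hscomp⟩, hsub⟩ := (OnePoint.hasBasis_nhds_infty.mem_iff).mp hU
      obtain ⟨R, hR⟩ := hscomp.isBounded.subset_closedBall 0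
      have h1 : 1 < ‖ϖ‖⁻¹ := (one_lt_inv₀ hϖpos).mpr hϖ.2.1
      obtain ⟨m, hm⟩ := pow_unbounded_of_one_lt R h1
      refine ⟨((fun x : F => (x : OnePoint F)) '' Metric.ball 0 ((‖ϖ‖ ^ k * ‖ϖ‖ ^ m)⁻¹))ᶜ,
        ⟨Aux.smat F ϖ hϖ.1 m, (∞ : OnePoint F),
          (Aux.orbit_scale_infty ϖ hϖ k hk m).symm⟩, ?_, ?_⟩
      · exact fun hc => OnePoint.infty_notMem_image_coe hc
      · have hsb : s ⊆ Metric.ball 0 ((‖ϖ‖ ^ k * ‖ϖ‖ ^ m)⁻¹) := by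
          intro x hx
          have hx' := hR hx
          rw [Metric.mem_closedBall] at hx'
          rw [Metric.mem_ball]
          calc dist x 0 ≤ R := hx'
            _ < (‖ϖ‖⁻¹) ^ m := hm
            _ ≤ (‖ϖ‖ ^ k * ‖ϖ‖ ^ m)⁻¹ := by
                rw [mul_inv, ← inv_pow, ← inv_pow]
                nth_rewrite 1 [← one_mul (‖ϖ‖⁻¹ ^ m)]
                apply mul_le_mul ?_ le_rfl (by positivity) (by positivity)
                exact one_le_pow₀ h1.le
        intro w hw
        apply hsub
        cases w with
        | infty => exact Or.inr rfl
        | coe x =>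
          left
          refine ⟨x, ?_, rfl⟩
          intro hxs
          exact hw ⟨x, hsb hxs, rfl⟩
  · intro n hn
    refine ⟨((0:F) : OnePoint F), ?_⟩
    rw [Aux.orbit_dmatN ϖ hϖ k hk n]
    congr 1
    ext x
    simp [Metric.mem_closedBall, dist_zero_right, pow_add]
  · intro U hU
    have hU' : (fun x : F => (x : OnePoint F)) ⁻¹' U ∈ nhds (0 : F) :=
      (OnePoint.continuous_coe.continuousAt).preimage_mem_nhds hU
    obtain ⟨δ, hδ, hball⟩ := Metric.mem_nhds_iff.mp hU'
    obtain ⟨m, hm⟩ := exists_pow_lt_of_lt_one hδ hϖ.2.1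
    refine ⟨m + 1, le_add_self, ?_⟩
    rintro w ⟨x, hx, rfl⟩
    apply hball
    rw [Metric.mem_ball, dist_zero_right]
    calc ‖x‖ ≤ ‖ϖ‖ ^ (k + (m + 1)) := hx
      _ ≤ ‖ϖ‖ ^ m := pow_le_pow_of_le_one (norm_nonneg _) hϖ.2.1.le (by omega)
      _ < δ := hm
end
end
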